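/- Let κ : [0,∞) → ℝ be a continuous nonpositive nonincreasing function, and let G : [0,∞) → ℝ be the unique solution of the Jacobi equation G'' + κ(t)·G = 0 with G(0) = 0, G'(0) = 1. Then G(t) ≥ t for all t ≥ 0. -/
import Mathlib


/-- Lower comparison bound for the Jacobi equation `G'' + κ G = 0`, `G(0)=0`, `G'(0)=1`,
with `κ` continuous, nonpositive and nonincreasing: `G(t) ≥ t` for `t ≥ 0`. -/
theorem jacobi_lower_bound
    (κ G G' : ℝ → ℝ)
    (hκc : ContinuousOn κ (Set.Ici 0))
    (hκ0 : ∀ t ≥ (0:ℝ), κ t ≤ 0)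
    (hκmono : AntitoneOn κ (Set.Ici 0))
    (hG' : ∀ t ≥ (0:ℝ), HasDerivAt G (G' t) t)
    (hG'' : ∀ t ≥ (0:ℝ), HasDerivAt G' (-(κ t * G t)) t)
    (hG0 : G 0 = 0) (hG'0 : G' 0 = 1) :
    ∀ t ≥ (0:ℝ), t ≤ G t := by
  -- a reusable monotonicity lemma on closed intervals
  have mono : ∀ (f f' : ℝ → ℝ) (a b : ℝ),
      (∀ x ∈ Set.Icc a b, HasDerivAt f (f' x) x) →
      (∀ x ∈ Set.Ioo a b, 0 ≤ f' x) → MonotoneOn f (Set.Icc a b) := by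
    intro f f' a b hd hpos
    apply monotoneOn_of_deriv_nonneg (convex_Icc a b)
    · exact fun x hx => (hd x hx).continuousAt.continuousWithinAt
    · intro x hx
      rw [interior_Icc] at hx
      exact (hd x (Set.Ioo_subset_Icc_self hx)).differentiableAt.differentiableWithinAt
    · intro x hx
      rw [interior_Icc] at hx
      rw [(hd x (Set.Ioo_subset_Icc_self hx)).deriv]
      exact hpos x hx
  -- key step: G' t ≥ 1 for all t ≥ 0
  have key : ∀ t ≥ (0:ℝ), 1 ≤ G' t := by
    by_contra hcon
    push_neg at hcon
    obtain ⟨t₀, ht₀, hlt⟩ := hcon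
    set S := {t : ℝ | 0 ≤ t ∧ G' t < 1} with hSdef
    have hS : S.Nonempty := ⟨t₀, ht₀, hlt⟩
    have hSbd : BddBelow S := ⟨0, fun x hx => hx.1⟩
    set T := sInf S with hTdef
    have hT0 : 0 ≤ T := le_csInf hS fun x hx => hx.1
    have hbelow : ∀ s, 0 ≤ s → s < T → 1 ≤ G' s := by
      intro s hs hsT
      by_contra h'
      push_neg at h'
      exact absurd (csInf_le hSbd ⟨hs, h'⟩) (not_le.2 hsT)
    -- G' T ≥ 1
    have hG'T : 1 ≤ G' T := by
      rcases eq_or_lt_of_le hT0 with h0 | h0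
      · rw [← h0, hG'0]
      · have htend : Filter.Tendsto G' (nhdsWithin T (Set.Iio T)) (nhds (G' T)) :=
          ((hG'' T hT0).continuousAt).continuousWithinAt.tendsto
        refine ge_of_tendsto htend ?_
        filter_upwards [Ioo_mem_nhdsLT_of_mem (Set.mem_Ioc.2 ⟨h0, le_refl T⟩)] with s hs
        exact hbelow s hs.1.le hs.2
    -- G T ≥ T
    have hGT : T ≤ G T := by
      have hm : MonotoneOn (fun t => G t - t) (Set.Icc 0 T) := by
        apply mono _ (fun t => G' t - 1)
        · exact fun x hx => (hG' x hx.1).sub (hasDerivAt_id x)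
        · intro x hx
          have := hbelow x hx.1.le hx.2
          linarith
      have := hm (Set.left_mem_Icc.2 hT0) (Set.right_mem_Icc.2 hT0) hT0
      simp only [hG0] at this
      linarith
    -- positivity of G' in a right neighborhood of T
    have hev : G' ⁻¹' Set.Ioi 0 ∈ nhds T :=
      (hG'' T hT0).continuousAt (Ioi_mem_nhds (lt_of_lt_of_le one_pos hG'T))
    obtain ⟨ε, hε, hball⟩ := Metric.mem_nhds_iff.1 hev
    set δ := ε / 2 with hδdef
    have hδ : 0 < δ := by positivity
    have hpos : ∀ x ∈ Set.Icc T (T + δ), 0 < G' x := by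
      intro x hx
      apply hball
      have : |x - T| < ε := by
        rw [abs_lt]
        constructor <;> [linarith [hx.1]; linarith [hx.2]]
      simpa [Metric.mem_ball, Real.dist_eq] using this
    -- G is monotone on [T, T+δ]
    have hGmono : MonotoneOn G (Set.Icc T (T + δ)) := by
      apply mono _ G'
      · exact fun x hx => hG' x (le_trans hT0 hx.1)
      · exact fun x hx => (hpos x (Set.Ioo_subset_Icc_self hx)).le
    -- hence G ≥ 0 there, so G' is monotone on [T, T+δ]
    have hG'mono : MonotoneOn G' (Set.Icc T (T + δ)) := by
      apply mono _ (fun t => -(κ t * G t))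
      · exact fun x hx => hG'' x (le_trans hT0 hx.1)
      · intro x hx
        have hx' := Set.Ioo_subset_Icc_self hx
        have hGx : 0 ≤ G x := by
          have := hGmono (Set.left_mem_Icc.2 (by linarith)) hx' hx.1.le
          linarith
        have hκx : κ x ≤ 0 := hκ0 x (le_trans hT0 hx'.1)
        nlinarith
    -- contradiction: there is s ∈ S with T ≤ s < T + δ but G' s ≥ 1
    obtain ⟨s, hsS, hslt⟩ := (csInf_lt_iff hSbd hS).1 (show T < T + δ by linarith)
    have hsT : T ≤ s := csInf_le hSbd hsS
    have : 1 ≤ G' s := le_trans hG'T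
      (hG'mono (Set.left_mem_Icc.2 (by linarith)) ⟨hsT, hslt.le⟩ hsT)
    exact absurd hsS.2 (not_lt.2 this)
  -- conclude
  intro t ht
  have hm : MonotoneOn (fun s => G s - s) (Set.Icc 0 t) := by
    apply mono _ (fun s => G' s - 1)
    · exact fun x hx => (hG' x hx.1).sub (hasDerivAt_id x)
    · intro x hx
      have := key x hx.1.le
      linarith
  have := hm (Set.left_mem_Icc.2 ht) (Set.right_mem_Icc.2 ht) ht
  simp only [hG0] at this
  linarith
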